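/- arXiv:1804.02769 — 2 statements merged into one kernel-verified Lean document; each statement's English description precedes it below -/
import Mathlib

section
/- For all natural numbers m, n, p with p ≤ n ≤ m, the following summation identity holds in K: ∑_{k=0}^{p} ([n−p+k]! · [m−k]! / ([n−p]! · [m]!))² · v^{2(k−p)(m−p−k+1) + k² − mk + (p−k)² − n(p−k)} · [m choose k] · [n choose p−k] = v^{p(2p − 2m − 1)} · [n]! · [m+n−p+1]! · [m−p]! / ([m]! · [p]! · [m+n−2p+1]! · [n−p]!). -/
open PowerSeries Finset

noncomputable section

/-- The base field `K = ℚ(v)`. -/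
abbrev K : Type := RatFunc ℚ

/-- The indeterminate `v` of `K = ℚ(v)`. -/
noncomputable def v : K := RatFunc.X

/-- The quantum integer `[m] = (v^m - v^{-m})/(v - v⁻¹)`. -/
noncomputable def qint (m : ℤ) : K := (v ^ m - v ^ (-m)) / (v - v⁻¹)

/-- The quantum factorial `[n]! = [n][n-1]⋯[1]`. -/
noncomputable def qfact (n : ℕ) : K := ∏ i ∈ Finset.range n, qint (i + 1)

/-- The quantum binomial coefficient `[m choose n]`. -/
noncomputable def qbinom (m n : ℤ) : K :=
  if 0 ≤ n ∧ n ≤ m then qfact m.toNat / (qfact n.toNat * qfact (m - n).toNat) else 0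

/-- The ring `R = K[[X]]`. -/
abbrev R : Type := PowerSeries K

/-- `T = 1 + X`, a unit of `R`. -/
noncomputable def T : R := 1 + PowerSeries.X

/-- `T⁻¹`, the inverse of the unit `T` in `R`. -/
noncomputable def Tinv : R := Ring.inverse T

/-- `[T;r] = (v^r T - v^{-r} T⁻¹)/(v - v⁻¹)`. -/
noncomputable def bT (r : ℤ) : R :=
  PowerSeries.C (R := K) ((v - v⁻¹)⁻¹) *
    (PowerSeries.C (R := K) (v ^ r) * T - PowerSeries.C (R := K) (v ^ (-r)) * Tinv)

/-- `[T⁻¹;r] = (v^r T⁻¹ - v^{-r} T)/(v - v⁻¹)`. -/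
noncomputable def bTinv (r : ℤ) : R :=
  PowerSeries.C (R := K) ((v - v⁻¹)⁻¹) *
    (PowerSeries.C (R := K) (v ^ r) * Tinv - PowerSeries.C (R := K) (v ^ (-r)) * T)

/-- `[T;r]_{(j)} = [T;r][T;r-1]⋯[T;r-j+1]`. -/
noncomputable def bTdesc (r : ℤ) (j : ℕ) : R := ∏ i ∈ Finset.range j, bT (r - i)

/-- `[T;r]^{(j)} = [T;r+1][T;r+2]⋯[T;r+j]`. -/
noncomputable def bTasc (r : ℤ) (j : ℕ) : R := ∏ i ∈ Finset.range j, bT (r + 1 + i)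

/-- `[T⁻¹;r]_{(j)} = [T⁻¹;r][T⁻¹;r-1]⋯[T⁻¹;r-j+1]`. -/
noncomputable def bTinvDesc (r : ℤ) (j : ℕ) : R := ∏ i ∈ Finset.range j, bTinv (r - i)

lemma hv : v ≠ 0 := RatFunc.X_ne_zero

lemma hvpow : ∀ (k : ℕ), 0 < k → v ^ k ≠ 1 := by
  intro k hk h
  have hX : (v : K) = algebraMap (Polynomial ℚ) K Polynomial.X := rfl
  rw [hX, ← map_pow, ← map_one (algebraMap (Polynomial ℚ) K)] at h
  have := RatFunc.algebraMap_injective ℚ h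
  have hdeg := congrArg Polynomial.natDegree this
  simp [Polynomial.natDegree_X_pow] at hdeg
  omega

lemma hd : v - v⁻¹ ≠ 0 := by
  intro h
  have h2 : v * v = 1 := by
    have h1 := sub_eq_zero.mp h
    rw [inv_eq_one_div, eq_div_iff hv] at h1
    rw [← h1]
  have := hvpow 2 (by norm_num)
  rw [pow_two] at this
  exact this h2

lemma qint_add (x y : ℤ) : qint (x + y) = v ^ (-y) * qint x + v ^ x * qint y := by
  unfold qint
  rw [mul_div_assoc', mul_div_assoc', ← add_div]
  congr 1
  rw [mul_sub, mul_sub, ← zpow_add₀ hv, ← zpow_add₀ hv, ← zpow_add₀ hv, ← zpow_add₀ hv]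
  ring_nf

lemma qint_ne_zero (n : ℕ) (hn : 0 < n) : qint n ≠ 0 := by
  unfold qint
  apply div_ne_zero _ hd
  intro h
  have h1 : v ^ (n:ℤ) = v ^ (-(n:ℤ)) := sub_eq_zero.mp h
  have h2 : v ^ (2*n) = 1 := by
    have := congrArg (· * v ^ (n:ℤ)) h1
    simp only [← zpow_add₀ hv] at this
    simpa [← zpow_natCast, two_mul] using this
  exact hvpow (2*n) (by omega) h2

lemma qfact_ne_zero (n : ℕ) : qfact n ≠ 0 := by
  unfold qfact
  apply prod_ne_zero_iff.mpr
  intro i _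
  exact_mod_cast qint_ne_zero (i+1) (by omega)

lemma qfact_succ (n : ℕ) : qfact (n+1) = qfact n * qint (n+1) := by
  unfold qfact
  rw [prod_range_succ]

noncomputable def qchoose : ℕ → ℕ → K
  | _, 0 => 1
  | 0, _+1 => 0
  | n+1, k+1 => v ^ (-(k+1 : ℤ)) * qchoose n (k+1) + v ^ ((n:ℤ) - k) * qchoose n k

lemma qchoose_zero_right (n : ℕ) : qchoose n 0 = 1 := by cases n <;> rfl

lemma qchoose_eq_zero : ∀ {n k : ℕ}, n < k → qchoose n k = 0 := by
  intro n
  induction n with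
  | zero => intro k hk; match k, hk with | k+1, _ => rfl
  | succ n ih =>
    intro k hk
    match k, hk with
    | k+1, hk =>
      show v ^ (-(k+1 : ℤ)) * qchoose n (k+1) + v ^ ((n:ℤ) - k) * qchoose n k = 0
      rw [ih (by omega), ih (by omega)]
      ring

lemma qfact_zero : qfact 0 = 1 := by simp [qfact]

lemma qchoose_mul : ∀ (n : ℕ), ∀ k ≤ n, qchoose n k * (qfact k * qfact (n-k)) = qfact n := by
  intro n
  induction n with
  | zero => intro k hk; interval_cases k; simp [qchoose_zero_right, qfact_zero]
  | succ n ih =>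
    intro k hk
    match k with
    | 0 => simp [qchoose_zero_right, qfact_zero]
    | k+1 =>
      show (v ^ (-(k+1 : ℤ)) * qchoose n (k+1) + v ^ ((n:ℤ) - k) * qchoose n k) *
        (qfact (k+1) * qfact (n+1-(k+1))) = qfact (n+1)
      rcases Nat.lt_or_ge k n with hkn | hkn
      · -- k+1 ≤ n
        have e1 : n + 1 - (k+1) = (n - (k+1)) + 1 := by omega
        have h1 := ih (k+1) (by omega)
        have h2 := ih k (by omega)
        have hq : qint ((n:ℤ)+1) = v ^ (-((k:ℤ) + 1)) * qint ((n:ℤ) - k) + v ^ ((n:ℤ)-k) * qint ((k:ℤ)+1) := by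
          have h := qint_add ((n:ℤ) - k) ((k:ℤ)+1)
          rw [show (n:ℤ) - k + ((k:ℤ)+1) = (n:ℤ)+1 by ring] at h
          rw [h]
        have hf : qfact (n-(k+1)) * qint ((n:ℤ) - (k:ℤ)) = qfact (n-k) := by
          have e4 : n - k = (n - (k+1)) + 1 := by omega
          rw [e4, qfact_succ]
          congr 2
          push_cast
          omega
        have hs : qfact (k+1) = qfact k * qint ((k:ℤ)+1) := qfact_succ k
        rw [qfact_succ n, e1, qfact_succ (n-(k+1))]
        rw [show ((n - (k+1) : ℕ) : ℤ) + 1 = (n:ℤ) - k by push_cast; omega]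
        rw [hq]
        linear_combination (v ^ (-((k:ℤ)+1)) * qint ((n:ℤ) - k)) * h1 +
          (v ^ ((n:ℤ)-k) * qchoose n k * qfact (k+1)) * hf +
          (v ^ ((n:ℤ)-k) * qchoose n k * qfact (n-k)) * hs +
          (v ^ ((n:ℤ)-k) * qint ((k:ℤ)+1)) * h2
      · -- k = n
        have hk' : k = n := by omega
        subst hk'
        have hc : qchoose k k = 1 := by
          have h2 := ih k le_rfl
          rw [Nat.sub_self, qfact_zero, mul_one] at h2
          exact mul_right_cancel₀ (qfact_ne_zero k) (by rw [h2, one_mul])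
        rw [qchoose_eq_zero (Nat.lt_succ_self k), hc]
        simp [qfact_zero, sub_self]

noncomputable def qA (a : ℤ) (k : ℕ) : K := ∏ i ∈ Finset.range k, qint (a+1+i)

lemma qA_zero (a : ℤ) : qA a 0 = 1 := by simp [qA]

lemma qA_succ (a : ℤ) (k : ℕ) : qA a (k+1) = qA a k * qint (a+1+k) := prod_range_succ _ _

lemma key (a b : ℤ) (p : ℕ) :
    ∑ k ∈ range (p+1), v ^ ((k:ℤ)*(a+b+2) - (p:ℤ)*(a+1)) * qchoose p k * qA a k * qA b (p-k)
      = ∏ i ∈ range p, qint (a+b+2+i) := by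
  induction p with
  | zero => simp [qchoose_zero_right, qA_zero]
  | succ p ih =>
    have recur : ∀ k : ℕ, qchoose (p+1) (k+1)
        = v ^ (-((k:ℤ)+1)) * qchoose p (k+1) + v ^ ((p:ℤ) - k) * qchoose p k := fun k => rfl
    -- the two halves
    set u1 : ℕ → K := fun k =>
      v ^ ((k:ℤ)*(a+b+2) - ((p:ℤ)+1)*(a+1) - k) * qchoose p k * qA a k * qA b (p+1-k) with hu1
    set u2 : ℕ → K := fun k =>
      v ^ (((k:ℤ)+1)*(a+b+2) - ((p:ℤ)+1)*(a+1) + p - k) * qchoose p k * qA a (k+1) * qA b (p-k)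
      with hu2
    have term : ∀ k ∈ range (p+1), u1 k + u2 k =
        v ^ ((k:ℤ)*(a+b+2) - (p:ℤ)*(a+1)) * qchoose p k * qA a k * qA b (p-k)
          * qint (a+b+2+p) := by
      intro k hk
      have hkp : k ≤ p := by simpa using Nat.lt_succ_iff.mp (mem_range.mp hk)
      have hadd := qint_add ((b:ℤ)+1+((p:ℤ)-k)) (a+1+(k:ℤ))
      rw [show (b:ℤ)+1+((p:ℤ)-k) + (a+1+(k:ℤ)) = a+b+2+p by ring] at hadd
      rw [hu1, hu2]
      simp only []
      rw [show p+1-k = (p-k)+1 by omega, qA_succ b (p-k), qA_succ a k]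
      rw [show ((p-k : ℕ):ℤ) = (p:ℤ)-k by push_cast [hkp]; ring]
      rw [show (k:ℤ)*(a+b+2) - ((p:ℤ)+1)*(a+1) - k
            = ((k:ℤ)*(a+b+2) - (p:ℤ)*(a+1)) + (-(a+1+(k:ℤ))) by ring, zpow_add₀ hv]
      rw [show ((k:ℤ)+1)*(a+b+2) - ((p:ℤ)+1)*(a+1) + p - k
            = ((k:ℤ)*(a+b+2) - (p:ℤ)*(a+1)) + ((b:ℤ)+1+((p:ℤ)-k)) by ring, zpow_add₀ hv]
      rw [hadd]
      ring
    have u1top : u1 (p+1) = 0 := by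
      rw [hu1]; simp only []
      rw [qchoose_eq_zero (Nat.lt_succ_self p)]
      ring
    calc ∑ k ∈ range (p+1+1),
          v ^ ((k:ℤ)*(a+b+2) - ((p+1:ℕ):ℤ)*(a+1)) * qchoose (p+1) k * qA a k * qA b (p+1-k)
        = ∑ k ∈ range (p+1), (u1 (k+1) + u2 k) + u1 0 := by
          rw [Finset.sum_range_succ']
          congr 1
          · refine Finset.sum_congr rfl fun k hk => ?_
            rw [recur k, hu1, hu2]
            simp only []
            rw [Nat.succ_sub_succ]
            push_cast
            rw [show ((k:ℤ)+1)*(a+b+2) - ((p:ℤ)+1)*(a+1) - ((k:ℤ)+1)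
                  = (((k:ℤ)+1)*(a+b+2) - ((p:ℤ)+1)*(a+1)) + (-((k:ℤ)+1)) by ring, zpow_add₀ hv]
            rw [show ((k:ℤ)+1)*(a+b+2) - ((p:ℤ)+1)*(a+1) + p - k
                  = (((k:ℤ)+1)*(a+b+2) - ((p:ℤ)+1)*(a+1)) + ((p:ℤ)-k) by ring, zpow_add₀ hv]
            ring
          · rw [hu1]
            simp only []
            rw [qchoose_zero_right, qchoose_zero_right]
            push_cast
            ring_nf
      _ = (∑ k ∈ range (p+1), u1 (k+1) + u1 0) + ∑ k ∈ range (p+1), u2 k := by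
          rw [Finset.sum_add_distrib]; ring
      _ = (∑ k ∈ range (p+1), u1 k + u1 (p+1)) + ∑ k ∈ range (p+1), u2 k := by
          rw [← Finset.sum_range_succ' u1 (p+1), Finset.sum_range_succ u1 (p+1)]
      _ = ∑ k ∈ range (p+1), (u1 k + u2 k) := by
          rw [u1top, Finset.sum_add_distrib]; ring
      _ = ∑ k ∈ range (p+1),
            v ^ ((k:ℤ)*(a+b+2) - (p:ℤ)*(a+1)) * qchoose p k * qA a k * qA b (p-k)
              * qint (a+b+2+p) := Finset.sum_congr rfl term
      _ = (∑ k ∈ range (p+1),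
            v ^ ((k:ℤ)*(a+b+2) - (p:ℤ)*(a+1)) * qchoose p k * qA a k * qA b (p-k))
              * qint (a+b+2+p) := by rw [← Finset.sum_mul]
      _ = ∏ i ∈ range (p+1), qint (a+b+2+i) := by
          rw [ih, Finset.prod_range_succ]

lemma qA_fact (c k : ℕ) : qfact (c + k) = qfact c * qA (c:ℤ) k := by
  induction k with
  | zero => simp [qA_zero]
  | succ k ih =>
    rw [show c + (k+1) = (c+k)+1 by omega, qfact_succ, ih, qA_succ, ← mul_assoc]
    congr 2
    push_cast
    ring

lemma qA_div (c k : ℕ) : qA (c:ℤ) k = qfact (c + k) / qfact c := by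
  rw [eq_div_iff (qfact_ne_zero c), qA_fact]; ring

lemma qchoose_div (p k : ℕ) (h : k ≤ p) :
    qchoose p k = qfact p / (qfact k * qfact (p-k)) := by
  rw [eq_div_iff (by exact mul_ne_zero (qfact_ne_zero k) (qfact_ne_zero (p-k)))]
  exact qchoose_mul p k h

lemma qbinom_nat (M k : ℕ) (h : k ≤ M) :
    qbinom (M:ℤ) (k:ℤ) = qfact M / (qfact k * qfact (M-k)) := by
  unfold qbinom
  rw [if_pos ⟨Int.natCast_nonneg k, by exact_mod_cast h⟩, ← Nat.cast_sub h,
    Int.toNat_natCast, Int.toNat_natCast, Int.toNat_natCast]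


/-- norm computation for the Clebsch-Gordan highest weight vectors. -/
theorem stmt7 (m n p : ℕ) (hpn : p ≤ n) (hnm : n ≤ m) :
    ∑ k ∈ Finset.range (p + 1),
        ((qfact (n - p + k) * qfact (m - k)) / (qfact (n - p) * qfact m)) ^ 2 *
          v ^ (2 * ((k : ℤ) - p) * ((m : ℤ) - p - k + 1) + (k : ℤ) ^ 2 - (m : ℤ) * k +
                ((p : ℤ) - k) ^ 2 - (n : ℤ) * ((p : ℤ) - k)) *
          qbinom m k * qbinom n ((p : ℤ) - k) =
      v ^ ((p : ℤ) * (2 * (p : ℤ) - 2 * m - 1)) *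
        (qfact n * qfact (m + n - p + 1) * qfact (m - p)) /
        (qfact m * qfact p * qfact (m + n - 2 * p + 1) * qfact (n - p)) := by
  have hkey := key ((n-p : ℕ):ℤ) ((m-p : ℕ):ℤ) p
  set C : K := v ^ ((p : ℤ) * (2 * (p : ℤ) - 2 * m - 1)) *
      (qfact n * qfact (m-p)) / (qfact (n-p) * qfact m * qfact p) with hC
  have step1 : ∑ k ∈ Finset.range (p + 1),
        ((qfact (n - p + k) * qfact (m - k)) / (qfact (n - p) * qfact m)) ^ 2 *
          v ^ (2 * ((k : ℤ) - p) * ((m : ℤ) - p - k + 1) + (k : ℤ) ^ 2 - (m : ℤ) * k +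
                ((p : ℤ) - k) ^ 2 - (n : ℤ) * ((p : ℤ) - k)) *
          qbinom m k * qbinom n ((p : ℤ) - k)
      = ∑ k ∈ Finset.range (p+1), C *
          (v ^ ((k:ℤ)*(((n-p : ℕ):ℤ)+((m-p : ℕ):ℤ)+2) - (p:ℤ)*(((n-p : ℕ):ℤ)+1))
            * qchoose p k * qA ((n-p : ℕ):ℤ) k * qA ((m-p : ℕ):ℤ) (p-k)) := by
    refine Finset.sum_congr rfl fun k hk => ?_
    have hkp : k ≤ p := Nat.lt_succ_iff.mp (mem_range.mp hk)
    have h1 : qbinom (m:ℤ) (k:ℤ) = qfact m / (qfact k * qfact (m-k)) :=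
      qbinom_nat m k (by omega)
    have h2 : qbinom (n:ℤ) ((p:ℤ) - k) = qfact n / (qfact (p-k) * qfact (n-p+k)) := by
      rw [← Nat.cast_sub hkp, qbinom_nat n (p-k) (by omega)]
      congr 3
      omega
    have h3 : qA ((n-p : ℕ):ℤ) k = qfact (n-p+k) / qfact (n-p) := qA_div (n-p) k
    have h4 : qA ((m-p : ℕ):ℤ) (p-k) = qfact (m-k) / qfact (m-p) := by
      rw [qA_div (m-p) (p-k), show m-p+(p-k) = m-k by omega]
    have h5 : qchoose p k = qfact p / (qfact k * qfact (p-k)) := qchoose_div p k hkp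
    have hexp : 2 * ((k : ℤ) - p) * ((m : ℤ) - p - k + 1) + (k : ℤ) ^ 2 - (m : ℤ) * k +
                ((p : ℤ) - k) ^ 2 - (n : ℤ) * ((p : ℤ) - k)
        = ((p : ℤ) * (2 * (p : ℤ) - 2 * m - 1))
          + ((k:ℤ)*(((n-p : ℕ):ℤ)+((m-p : ℕ):ℤ)+2) - (p:ℤ)*(((n-p : ℕ):ℤ)+1)) := by
      have e1 : ((n-p : ℕ):ℤ) = (n:ℤ) - p := by push_cast [hpn]; ring
      have e2 : ((m-p : ℕ):ℤ) = (m:ℤ) - p := by push_cast [hpn.trans hnm]; ring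
      rw [e1, e2]; ring
    rw [h1, h2, h3, h4, h5, hexp, zpow_add₀ hv, hC]
    have q1 := qfact_ne_zero (n-p+k)
    have q2 := qfact_ne_zero (m-k)
    have q3 := qfact_ne_zero (n-p)
    have q4 := qfact_ne_zero m
    have q5 := qfact_ne_zero k
    have q6 := qfact_ne_zero (p-k)
    have q7 := qfact_ne_zero p
    have q8 := qfact_ne_zero (m-p)
    have q9 := qfact_ne_zero n
    set P : ℤ := (p : ℤ) * (2 * (p:ℤ) - 2 * m - 1)
    set W : ℤ := (k:ℤ)*(((n-p : ℕ):ℤ)+((m-p : ℕ):ℤ)+2) - (p:ℤ)*(((n-p : ℕ):ℤ)+1)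
    calc ((qfact (n-p+k) * qfact (m-k)) / (qfact (n-p) * qfact m))^2 * (v ^ P * v ^ W) *
            (qfact m / (qfact k * qfact (m-k))) * (qfact n / (qfact (p-k) * qfact (n-p+k)))
        = (qfact (n-p+k)^2 * qfact (m-k)^2 * v^P * v^W * qfact m * qfact n) /
            (qfact (n-p)^2 * qfact m^2 * qfact k * qfact (m-k) * qfact (p-k) * qfact (n-p+k)) := by
          ring
      _ = (v^P * qfact n * qfact (m-p) * v^W * qfact p * qfact (n-p+k) * qfact (m-k)) /
            (qfact (n-p)^2 * qfact m * qfact p * qfact k * qfact (p-k) * qfact (m-p)) := by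
          rw [div_eq_div_iff
            (mul_ne_zero (mul_ne_zero (mul_ne_zero (mul_ne_zero (mul_ne_zero
              (pow_ne_zero 2 q3) (pow_ne_zero 2 q4)) q5) q2) q6) q1)
            (mul_ne_zero (mul_ne_zero (mul_ne_zero (mul_ne_zero (mul_ne_zero
              (pow_ne_zero 2 q3) q4) q7) q5) q6) q8)]
          ring
      _ = v ^ P * (qfact n * qfact (m-p)) / (qfact (n-p) * qfact m * qfact p) *
            (v ^ W * (qfact p / (qfact k * qfact (p-k))) * (qfact (n-p+k) / qfact (n-p)) *
              (qfact (m-k) / qfact (m-p))) := by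
          ring
  rw [step1, ← Finset.mul_sum, hkey]
  have hprod : ∏ i ∈ range p, qint (((n-p : ℕ):ℤ) + ((m-p : ℕ):ℤ) + 2 + i)
      = qfact (m+n-p+1) / qfact (m+n-2*p+1) := by
    have : ∏ i ∈ range p, qint (((n-p : ℕ):ℤ) + ((m-p : ℕ):ℤ) + 2 + i)
        = qA ((m+n-2*p+1 : ℕ):ℤ) p := by
      refine Finset.prod_congr rfl fun i _ => ?_
      congr 1
      push_cast [hpn, hpn.trans hnm, show 2*p ≤ m + n by omega]
      ring
    rw [this, qA_div, show m+n-2*p+1+p = m+n-p+1 by omega]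
  rw [hprod, hC]
  have q3 := qfact_ne_zero (n-p)
  have q4 := qfact_ne_zero m
  have q7 := qfact_ne_zero p
  have q10 := qfact_ne_zero (m+n-2*p+1)
  field_simp
end
end

section
/- For every integer r ≥ 1, setting α(r) = −∑_{s=1}^{r} (v^s + v^{−s})/(v^s − v^{−s}) ∈ K, one has the second-order expansions [T;r]_{(r)} ≡ [r]! · (1 − α(r)(T−1)) mod (T−1)² and [T^{−1};r]_{(r)} ≡ [r]! · (1 + α(r)(T−1)) mod (T−1)². -/
open PowerSeries Finset

noncomputable section

/-! ### Auxiliary material -/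

lemma aux_v_pow_ne_one (n : ℕ) (hn : n ≠ 0) : (v : K) ^ n ≠ 1 := by
  intro h
  have h2 : (algebraMap (Polynomial ℚ) K) (Polynomial.X ^ n) =
      (algebraMap (Polynomial ℚ) K) 1 := by
    simpa [v, map_pow, RatFunc.algebraMap_X] using h
  have h3 := IsFractionRing.injective (Polynomial ℚ) K h2
  have := congrArg Polynomial.natDegree h3
  simp [Polynomial.natDegree_X_pow] at this
  exact hn this

lemma aux_hv0 : (v : K) ≠ 0 := RatFunc.X_ne_zero

lemma aux_v_zpow_ne (m : ℤ) (hm : m ≠ 0) : (v : K) ^ m ≠ v ^ (-m) := by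
  intro h
  have h2 : (v:K) ^ (2*m) = 1 := by
    rw [two_mul, zpow_add₀ aux_hv0]
    nth_rewrite 1 [h]
    rw [← zpow_add₀ aux_hv0, neg_add_cancel, zpow_zero]
  rcases lt_or_gt_of_ne hm with hneg | hpos
  · have h4 : (v:K) ^ ((2*(-m)).toNat) = 1 := by
      rw [← zpow_natCast, Int.toNat_of_nonneg (by omega)]
      have := congrArg (·⁻¹) h2
      simp only [← zpow_neg, inv_one] at this
      simpa [neg_mul, mul_neg] using this
    exact aux_v_pow_ne_one _ (by omega) h4
  · have h4 : (v:K) ^ ((2*m).toNat) = 1 := by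
      rw [← zpow_natCast, Int.toNat_of_nonneg (by omega)]; exact h2
    exact aux_v_pow_ne_one _ (by omega) h4

lemma aux_hden : (v : K) - v⁻¹ ≠ 0 := by
  have := aux_v_zpow_ne 1 one_ne_zero
  simpa [zpow_one, sub_ne_zero] using sub_ne_zero.2 this

lemma aux_qint_ne_zero (m : ℤ) (hm : m ≠ 0) : qint m ≠ 0 :=
  div_ne_zero (sub_ne_zero.2 (aux_v_zpow_ne m hm)) aux_hden

/-- The first-order coefficient of `[T;m]`. -/
noncomputable def cc (m : ℤ) : K := (v ^ m + v ^ (-m)) * (v - v⁻¹)⁻¹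

/-- The ratio `(v^m + v^{-m})/(v^m - v^{-m})`. -/
noncomputable def rr (m : ℤ) : K := (v ^ m + v ^ (-m)) / (v ^ m - v ^ (-m))

lemma aux_abstract (A B d ε : K) (hA : A ≠ 0) (hd : d ≠ 0) :
    A / d * (ε * (B / A)) = ε * (B * d⁻¹) := by
  field_simp

lemma aux_qint_mul_rr (m : ℤ) (hm : m ≠ 0) (ε : K) :
    qint m * (ε * rr m) = ε * cc m :=
  aux_abstract _ _ _ ε (sub_ne_zero.2 (aux_v_zpow_ne m hm)) aux_hden

def I2 : Ideal R := Ideal.span {(PowerSeries.X : R) ^ 2}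

noncomputable def pr : R →+* (R ⧸ I2) := Ideal.Quotient.mk I2

lemma aux_x2 : pr PowerSeries.X * pr PowerSeries.X = 0 := by
  rw [← map_mul, ← sq]
  exact Ideal.Quotient.eq_zero_iff_mem.2 (Ideal.subset_span rfl)

lemma aux_T_unit : IsUnit (T : R) := by
  rw [PowerSeries.isUnit_iff_constantCoeff]
  simp [T]

lemma aux_Tinv_sub : Tinv - (1 - PowerSeries.X) =
    (PowerSeries.X : R) ^ 2 * Tinv := by
  have h1 : T * Tinv = 1 := Ring.mul_inverse_cancel T aux_T_unit
  rw [T] at h1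
  linear_combination (1 - (PowerSeries.X : R)) * h1

lemma aux_Tinv_mod : pr ((1 - PowerSeries.X) - Tinv) = 0 := by
  rw [pr, Ideal.Quotient.eq_zero_iff_mem]
  rw [show (1 - PowerSeries.X) - Tinv = -(Tinv - (1 - PowerSeries.X)) by ring, aux_Tinv_sub]
  exact neg_mem (Ideal.mem_span_singleton.2 ⟨Tinv, rfl⟩)

lemma aux_bT_mod (m : ℤ) :
    pr (bT m) = pr (PowerSeries.C (R := K) (qint m)) +
      pr (PowerSeries.C (R := K) (cc m)) * pr PowerSeries.X := by
  have key : bT m - (PowerSeries.C (R := K) (qint m) + PowerSeries.C (R := K) (cc m) * PowerSeries.X) =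
      PowerSeries.C (R := K) ((v - v⁻¹)⁻¹) * PowerSeries.C (R := K) (v ^ (-m)) *
        ((1 - PowerSeries.X) - Tinv) := by
    rw [bT, T, qint, cc, div_eq_mul_inv]
    simp only [map_mul, map_sub, map_add]
    ring
  have h0 : pr (bT m - (PowerSeries.C (R := K) (qint m) +
      PowerSeries.C (R := K) (cc m) * PowerSeries.X)) = 0 := by
    rw [key, map_mul, aux_Tinv_mod, mul_zero]
  rw [map_sub] at h0
  have := sub_eq_zero.1 h0
  rw [this, map_add, map_mul]

lemma aux_bTinv_mod (m : ℤ) :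
    pr (bTinv m) = pr (PowerSeries.C (R := K) (qint m)) +
      pr (PowerSeries.C (R := K) (-cc m)) * pr PowerSeries.X := by
  have key : bTinv m - (PowerSeries.C (R := K) (qint m) +
      PowerSeries.C (R := K) (-cc m) * PowerSeries.X) =
      PowerSeries.C (R := K) ((v - v⁻¹)⁻¹) * PowerSeries.C (R := K) (v ^ m) *
        (Tinv - (1 - PowerSeries.X)) := by
    rw [bTinv, T, qint, cc, div_eq_mul_inv]
    simp only [map_mul, map_sub, map_add, map_neg]
    ring
  have h0 : pr (bTinv m - (PowerSeries.C (R := K) (qint m) +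
      PowerSeries.C (R := K) (-cc m) * PowerSeries.X)) = 0 := by
    rw [key, map_mul]
    have : pr (Tinv - (1 - PowerSeries.X)) = 0 := by
      have h := aux_Tinv_mod
      rw [show Tinv - (1 - PowerSeries.X) = -((1 - PowerSeries.X) - Tinv) by ring,
        map_neg, h, neg_zero]
    rw [this, mul_zero]
  rw [map_sub] at h0
  have := sub_eq_zero.1 h0
  rw [this, map_add, map_mul]

lemma aux_prod_one_add {S : Type*} [CommRing S] (x : S) (hx : x * x = 0)
    (s : Finset ℕ) (t : ℕ → S) :
    ∏ i ∈ s, (1 + t i * x) = 1 + (∑ i ∈ s, t i) * x := by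
  induction s using Finset.induction with
  | empty => simp
  | insert _ _ h ih =>
    rw [Finset.prod_insert h, ih, Finset.sum_insert h]
    linear_combination (t _ * ∑ i ∈ _, t i) * hx

lemma aux_prodA (r : ℕ) : ∏ i ∈ range r, qint ((r:ℤ) - i) = qfact r := by
  rw [qfact, ← Finset.prod_range_reflect]
  refine Finset.prod_congr rfl fun i hi => ?_
  have := mem_range.1 hi
  congr 1
  omega

lemma aux_sum_Icc_one (f : ℕ → K) (r : ℕ) :
    ∑ s ∈ Icc 1 r, f s = ∑ i ∈ range r, f (i + 1) := by
  induction r with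
  | zero => simp
  | succ n ih => rw [Finset.sum_Icc_succ_top (by omega), ih, Finset.sum_range_succ]

lemma aux_sumB (r : ℕ) : ∑ i ∈ range r, rr ((r:ℤ) - i) =
    ∑ s ∈ Icc 1 r, (v ^ (s : ℤ) + v ^ (-(s : ℤ))) / (v ^ (s : ℤ) - v ^ (-(s : ℤ))) := by
  have h : ∀ s : ℕ, (v ^ (s : ℤ) + v ^ (-(s : ℤ))) / (v ^ (s : ℤ) - v ^ (-(s : ℤ)))
      = rr (s : ℤ) := fun s => rfl
  simp only [h]
  rw [aux_sum_Icc_one (fun s => rr (s : ℤ)) r, ← Finset.sum_range_reflect]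
  refine Finset.sum_congr rfl fun i hi => ?_
  have := mem_range.1 hi
  congr 1
  omega

lemma aux_prod_key (r : ℕ) (F : ℤ → R) (ε : K)
    (hF : ∀ m : ℤ, 1 ≤ m → pr (F m) = pr (PowerSeries.C (R := K) (qint m)) +
      pr (PowerSeries.C (R := K) (ε * cc m)) * pr PowerSeries.X) :
    pr (∏ i ∈ range r, F ((r:ℤ) - i)) =
      pr (PowerSeries.C (R := K) (qfact r)) *
        (1 + pr (PowerSeries.C (R := K) (ε * ∑ s ∈ Icc 1 r,
          (v ^ (s : ℤ) + v ^ (-(s : ℤ))) / (v ^ (s : ℤ) - v ^ (-(s : ℤ))))) *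
          pr PowerSeries.X) := by
  rw [map_prod]
  have step : ∀ i ∈ range r, pr (F ((r:ℤ) - i)) =
      pr (PowerSeries.C (R := K) (qint ((r:ℤ) - i))) *
        (1 + pr (PowerSeries.C (R := K) (ε * rr ((r:ℤ) - i))) * pr PowerSeries.X) := by
    intro i hi
    have hir := mem_range.1 hi
    have him : (1:ℤ) ≤ (r:ℤ) - i := by omega
    have hm0 : ((r:ℤ) - i) ≠ 0 := by omega
    have hC : PowerSeries.C (R := K) (ε * cc ((r:ℤ) - i)) =
        PowerSeries.C (R := K) (qint ((r:ℤ) - i)) * PowerSeries.C (R := K) (ε * rr ((r:ℤ) - i)) := by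
      rw [← map_mul, aux_qint_mul_rr _ hm0]
    rw [hF _ him, hC, map_mul]
    ring
  rw [Finset.prod_congr rfl step, Finset.prod_mul_distrib,
    aux_prod_one_add _ aux_x2, ← map_prod, ← map_prod, aux_prodA,
    ← map_sum, ← map_sum, ← Finset.mul_sum, aux_sumB]

/-- with `α(r) = -∑_{s=1}^{r} (v^s + v^{-s})/(v^s - v^{-s})`, one has
`[T;r]_{(r)} ≡ [r]!(1 - α(r)(T-1))` and `[T⁻¹;r]_{(r)} ≡ [r]!(1 + α(r)(T-1))`
mod `(T-1)²`. -/
theorem stmt13 (r : ℕ) (hr : 1 ≤ r) :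
    bTdesc r r - PowerSeries.C (R := K) (qfact r) *
        (1 - PowerSeries.C (R := K)
            (-∑ s ∈ Finset.Icc 1 r, (v ^ (s : ℤ) + v ^ (-(s : ℤ))) /
              (v ^ (s : ℤ) - v ^ (-(s : ℤ)))) * PowerSeries.X) ∈
      Ideal.span {(PowerSeries.X : R) ^ 2} ∧
    bTinvDesc r r - PowerSeries.C (R := K) (qfact r) *
        (1 + PowerSeries.C (R := K)
            (-∑ s ∈ Finset.Icc 1 r, (v ^ (s : ℤ) + v ^ (-(s : ℤ))) /
              (v ^ (s : ℤ) - v ^ (-(s : ℤ)))) * PowerSeries.X) ∈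
      Ideal.span {(PowerSeries.X : R) ^ 2} := by
  set Sr : K := ∑ s ∈ Finset.Icc 1 r, (v ^ (s : ℤ) + v ^ (-(s : ℤ))) /
      (v ^ (s : ℤ) - v ^ (-(s : ℤ))) with hS
  constructor
  · show _ ∈ I2
    rw [← Ideal.Quotient.eq_zero_iff_mem]
    show pr _ = 0
    have e1 := aux_prod_key r bT 1 (fun m _ => by rw [one_mul]; exact aux_bT_mod m)
    rw [map_sub]
    rw [show bTdesc (r:ℤ) r = ∏ i ∈ range r, bT ((r:ℤ) - i) from rfl, e1]
    rw [← hS]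
    simp only [map_mul, map_sub, map_add, map_one, map_neg]
    ring
  · show _ ∈ I2
    rw [← Ideal.Quotient.eq_zero_iff_mem]
    show pr _ = 0
    have e1 := aux_prod_key r bTinv (-1)
      (fun m _ => by rw [neg_one_mul]; exact aux_bTinv_mod m)
    rw [map_sub]
    rw [show bTinvDesc (r:ℤ) r = ∏ i ∈ range r, bTinv ((r:ℤ) - i) from rfl, e1]
    rw [← hS]
    simp only [map_mul, map_sub, map_add, map_one, map_neg]
    ring
end
end
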